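/- Let A be an Aronszajn line (here use only: A is an uncountable linear order with no strictly ω₁-increasing or ω₁-decreasing sequence, of cardinality ℵ₁ with underlying set ω₁). Identifying a ∈ A with ã ∈ 2^{ω₁} as the characteristic function of its strict lower set, for every a ∈ A the ordinal δ_A(a) := sup{Δ_A(a,b)+1 : b ∈ A, b ≠ a} is countable, where Δ_A(a,b) is the least coordinate where ã and b̃ differ. -/

import Mathlib

/-- The set of countable ordinals, i.e. the underlying set `ω₁`. -/
abbrev CtblOrd : Type 1 := {o : Ordinal.{0} // o < (Cardinal.aleph 1).ord}

open Cardinal Ordinal Set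

/-- A countable bounded set of countable ordinals is strictly bounded below `ω₁`. -/
lemma ctbl_bdd (V : Set Ordinal.{0}) (hV : ∀ v ∈ V, v < (Cardinal.aleph 1).ord)
    (hcnt : Countable ↥V) :
    ∃ γ : Ordinal, γ < (Cardinal.aleph 1).ord ∧ ∀ v ∈ V, v < γ := by
  haveI := hcnt
  haveI : Small.{0} ↥V := by
    rw [← Ordinal.bddAbove_iff_small]
    exact ⟨(Cardinal.aleph 1).ord, fun v hv => (hV v hv).le⟩
  set o : Shrink ↥V → Ordinal.{0} := fun w => ((equivShrink ↥V).symm w).1 with ho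
  haveI : Countable (Shrink ↥V) := Countable.of_equiv _ (equivShrink ↥V)
  have h1 : iSup o < (Cardinal.aleph 1).ord :=
    by rw [Cardinal.ord_aleph]; exact Ordinal.iSup_lt_omega_one (fun w => by rw [← Cardinal.ord_aleph]; exact hV _ ((equivShrink ↥V).symm w).2)
  have hlim : Order.IsSuccLimit ((Cardinal.aleph 1).ord) := Cardinal.isSuccLimit_ord (aleph0_le_aleph 1)
  refine ⟨iSup o + 1, ?_, ?_⟩
  · rw [Ordinal.add_one_eq_succ]
    exact hlim.succ_lt h1
  · intro v hv
    have h2 : v ≤ iSup o := by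
      have h3 : o (equivShrink ↥V ⟨v, hv⟩) = v := by simp [ho]
      rw [← h3]
      exact le_ciSup (Ordinal.bddAbove_range _) _
    rw [Ordinal.add_one_eq_succ]
    exact h2.trans_lt (Order.lt_succ _)

/-- From a family with unbounded `Δ`-values, extract an `ω₁`-sequence with strictly
increasing `Δ`-values. -/
lemma chain_of_unbdd (P : CtblOrd → Prop) (D : CtblOrd → CtblOrd)
    (unbdd : ∀ γ : CtblOrd, ∃ b, P b ∧ γ ≤ D b) :
    ∃ F : CtblOrd → CtblOrd, (∀ ξ, P (F ξ)) ∧ ∀ x y, x < y → D (F x) < D (F y) := by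
  classical
  set c : Ordinal.{0} := (Cardinal.aleph 1).ord with hc
  set V : Set Ordinal.{0} := {v | ∃ b, P b ∧ (D b).1 = v} with hVdef
  have hVlt : ∀ v ∈ V, v < c := by rintro v ⟨b, -, rfl⟩; exact (D b).2
  have Vnotctbl : ¬ Countable ↥V := by
    intro h
    obtain ⟨γ, hγc, hγ⟩ := ctbl_bdd V hVlt h
    obtain ⟨b, hPb, hb⟩ := unbdd ⟨γ, hγc⟩
    have : (D b).1 ∈ V := ⟨b, hPb, rfl⟩
    exact absurd (hγ _ this) (not_lt.mpr hb)
  set T : Set Ordinal.{0} := V ∪ Set.Ici c with hT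
  have hTu : ¬ BddAbove T := by
    rintro ⟨x, hx⟩
    have h1 : max x c + 1 ∈ T := Or.inr (le_trans (le_max_right x c) (le_of_lt
      (by rw [Ordinal.add_one_eq_succ]; exact Order.lt_succ _)))
    have h2 := hx h1
    have h3 : x < max x c + 1 := lt_of_le_of_lt (le_max_left x c)
      (by rw [Ordinal.add_one_eq_succ]; exact Order.lt_succ _)
    exact absurd (h3.trans_le h2) (lt_irrefl x)
  have hmono := Ordinal.enumOrd_strictMono hTu
  have hmem := Ordinal.enumOrd_mem hTu
  have helt : ∀ ξ : Ordinal, ξ < c → Ordinal.enumOrd T ξ < c := by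
    intro ξ hξ
    by_contra h
    push_neg at h
    -- every element of V appears in the enumeration before ξ
    have key : ∀ v : ↥V, ∃ η : Ordinal, Ordinal.enumOrd T η = v.1 ∧ η < ξ := by
      intro v
      have hvT : v.1 ∈ T := Or.inl v.2
      have : v.1 ∈ Set.range (Ordinal.enumOrd T) := by
        rw [Ordinal.range_enumOrd hTu]; exact hvT
      obtain ⟨η, hη⟩ := this
      refine ⟨η, hη, ?_⟩
      have : Ordinal.enumOrd T η < Ordinal.enumOrd T ξ :=
        lt_of_lt_of_le (by rw [hη]; exact hVlt _ v.2) h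
      exact hmono.lt_iff_lt.mp this
    set j : ↥V → ↥(Set.Iio ξ) := fun v => ⟨(key v).choose, (key v).choose_spec.2⟩ with hj
    have hjinj : Function.Injective j := by
      intro v w hvw
      have h1 := (key v).choose_spec.1
      have h2 := (key w).choose_spec.1
      apply Subtype.ext
      rw [← h1, ← h2]
      simp only [hj, Subtype.mk.injEq] at hvw
      exact congrArg (Ordinal.enumOrd T) (congrArg Subtype.val hvw)
    have hctIio : Countable ↥(Set.Iio ξ) := by
      rw [← Cardinal.mk_le_aleph0_iff, Ordinal.mk_Iio_ordinal, ← Cardinal.lift_aleph0.{1,0}]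
      have hcard : ξ.card < ℵ₁ := Cardinal.lt_ord.mp hξ
      rw [← Cardinal.succ_aleph0] at hcard
      exact Cardinal.lift_le.mpr (Order.lt_succ_iff.mp hcard)
    exact Vnotctbl (Function.Injective.countable hjinj)
  have hmemV : ∀ ξ : CtblOrd, ∃ b, P b ∧ (D b).1 = Ordinal.enumOrd T ξ.1 := by
    intro ξ
    rcases hmem ξ.1 with h | h
    · exact h
    · exact absurd (helt ξ.1 ξ.2) (not_lt.mpr h)
  refine ⟨fun ξ => (hmemV ξ).choose, fun ξ => (hmemV ξ).choose_spec.1, ?_⟩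
  intro x y hxy
  have h1 := (hmemV x).choose_spec.2
  have h2 := (hmemV y).choose_spec.2
  show (D _).1 < (D _).1
  rw [h1, h2]
  exact hmono (Subtype.coe_lt_coe.mpr hxy)

/-- Let `A` be a short linear order `r` on the underlying set `ω₁` (no `ω₁`-increasing
and no `ω₁`-decreasing sequence), and for `a ≠ b` let `Δ a b` be the least ordinal where
the characteristic functions of the strict lower sets of `a` and `b` differ.  Then for
every `a`, the ordinal `δ_A(a) = sup {Δ(a,b)+1 : b ≠ a}` is countable, i.e. the values
`Δ a b` are bounded by some countable ordinal `γ`. -/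
theorem delta_sup_countable
    (r : CtblOrd → CtblOrd → Prop) [IsStrictTotalOrder CtblOrd r]
    (hshort₁ : ¬ ∃ f : CtblOrd → CtblOrd, ∀ x y : CtblOrd, x < y → r (f x) (f y))
    (hshort₂ : ¬ ∃ f : CtblOrd → CtblOrd, ∀ x y : CtblOrd, x < y → r (f y) (f x))
    (Δ : CtblOrd → CtblOrd → CtblOrd)
    (hΔ : ∀ a b : CtblOrd, a ≠ b →
      (¬ (r (Δ a b) a ↔ r (Δ a b) b) ∧ ∀ ξ : CtblOrd, ξ < Δ a b → (r ξ a ↔ r ξ b)))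
    (a : CtblOrd) :
    ∃ γ : CtblOrd, ∀ b : CtblOrd, b ≠ a → Δ a b < γ := by
  classical
  by_contra hcon
  push_neg at hcon
  -- on the side above `a`, larger Δ-value means r-smaller
  have key₁ : ∀ b b' : CtblOrd, b ≠ a → b' ≠ a → r a b → r a b' →
      Δ a b < Δ a b' → r b' b := by
    intro b b' hb hb' hab hab' hlt
    obtain ⟨h1, h2⟩ := hΔ a b (Ne.symm hb)
    have h3 := (hΔ a b' (Ne.symm hb')).2 (Δ a b) hlt
    have hnda : ¬ r (Δ a b) a := fun h =>
      h1 ⟨fun _ => IsTrans.trans _ _ _ h hab, fun _ => h⟩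
    have hdb : r (Δ a b) b := by
      by_contra h
      exact h1 (iff_of_false hnda h)
    have hndb' : ¬ r (Δ a b) b' := fun h => hnda (h3.mpr h)
    rcases trichotomous_of r b' b with h | h | h
    · exact h
    · rw [h] at hlt
      exact absurd hlt (lt_irrefl _)
    · exact absurd (IsTrans.trans _ _ _ hdb h) hndb'
  -- on the side below `a`, larger Δ-value means r-larger
  have key₂ : ∀ b b' : CtblOrd, b ≠ a → b' ≠ a → r b a → r b' a →
      Δ a b < Δ a b' → r b b' := by
    intro b b' hb hb' hba hb'a hlt
    obtain ⟨h1, h2⟩ := hΔ a b (Ne.symm hb)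
    have h3 := (hΔ a b' (Ne.symm hb')).2 (Δ a b) hlt
    have hndb : ¬ r (Δ a b) b := fun h =>
      h1 ⟨fun _ => h, fun _ => IsTrans.trans _ _ _ h hba⟩
    have hda : r (Δ a b) a := by
      by_contra h
      exact h1 (iff_of_false h hndb)
    have hdb' : r (Δ a b) b' := h3.mp hda
    rcases trichotomous_of r b b' with h | h | h
    · exact h
    · rw [h] at hlt
      exact absurd hlt (lt_irrefl _)
    · exact absurd (IsTrans.trans _ _ _ hdb' h) hndb
  -- one of the two sides is Δ-unbounded
  have hside : (∀ γ : CtblOrd, ∃ b, (b ≠ a ∧ r a b) ∧ γ ≤ Δ a b) ∨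
      (∀ γ : CtblOrd, ∃ b, (b ≠ a ∧ r b a) ∧ γ ≤ Δ a b) := by
    by_contra hs
    push_neg at hs
    obtain ⟨⟨γ₁, h₁⟩, ⟨γ₂, h₂⟩⟩ := hs
    obtain ⟨b, hba, hbg⟩ := hcon (max γ₁ γ₂)
    rcases trichotomous_of r a b with hr | hr | hr
    · exact absurd hbg (not_le.mpr (lt_of_lt_of_le (h₁ b ⟨hba, hr⟩) (le_max_left _ _)))
    · exact absurd hr.symm hba
    · exact absurd hbg (not_le.mpr (lt_of_lt_of_le (h₂ b ⟨hba, hr⟩) (le_max_right _ _)))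
  rcases hside with hun | hun
  · obtain ⟨F, hP, hD⟩ := chain_of_unbdd (fun b => b ≠ a ∧ r a b) (Δ a) hun
    exact hshort₂ ⟨F, fun x y hxy =>
      key₁ (F x) (F y) (hP x).1 (hP y).1 (hP x).2 (hP y).2 (hD x y hxy)⟩
  · obtain ⟨F, hP, hD⟩ := chain_of_unbdd (fun b => b ≠ a ∧ r b a) (Δ a) hun
    exact hshort₁ ⟨F, fun x y hxy =>
      key₂ (F x) (F y) (hP x).1 (hP y).1 (hP x).2 (hP y).2 (hD x y hxy)⟩
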